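/- Suppose that both condition C1 and condition C2 hold at infinitely many iterations. Then there exists a piecewise geometric sequence (y_k)_{k≥1} with rate β = max{1/√γ, η} such that Δ_k ≤ y_k for all k ≥ 1. -/

import Mathlib

/-- A positive real sequence `(y k)_{k ≥ 1}` is a piecewise geometric sequence (PGS)
with rate `β ∈ (0,1)` and (strictly increasing) chunk indices `n 1 < n 2 < ⋯` if each
chunk `y (n j + 1), …, y (n (j+1))` is geometric with rate `β`, and the peaks
`y (n j + 1)` themselves form a geometric sequence with rate `β`. -/
def IsPGSWith (y : ℕ → ℝ) (β : ℝ) (n : ℕ → ℕ) : Prop :=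
  (∀ k, 1 ≤ k → 0 < y k) ∧ 0 < β ∧ β < 1 ∧
  (∀ j, 1 ≤ j → n j < n (j + 1)) ∧
  (∀ j, 1 ≤ j → ∀ k, n j + 1 ≤ k → k ≤ n (j + 1) →
    y k = y (n j + 1) * β ^ (k - n j - 1)) ∧
  (∀ j, 1 ≤ j → y (n j + 1) = y (n 1 + 1) * β ^ (j - 1))

/-- **Lemma 2 of the paper.** If both conditions `C1` and `C2` hold at
infinitely many iterations (case `S3`), then the residuals `(Δ k)` are bounded by a
piecewise geometric sequence with rate `β = max (1/√γ) η`. -/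
theorem residual_PGS_upper_bound_case_S3
    (Δ ρ : ℕ → ℝ) (γ η c : ℝ)
    (hΔpos : ∀ k, 1 ≤ k → 0 < Δ k) (hρpos : ∀ k, 1 ≤ k → 0 < ρ k)
    (hγ : 1 < γ) (hη0 : 0 < η) (hη1 : η < 1) (hc : 0 < c)
    (hrule1 : ∀ k, 1 ≤ k → η * Δ k ≤ Δ (k + 1) → ρ (k + 1) = γ * ρ k)
    (hrule2 : ∀ k, 1 ≤ k → Δ (k + 1) < η * Δ k → ρ (k + 1) = ρ k)
    (hlem : ∀ k, 1 ≤ k → η * Δ k ≤ Δ (k + 1) → Δ (k + 1) ≤ c / Real.sqrt (ρ k))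
    (hinf1 : {k : ℕ | 1 ≤ k ∧ η * Δ k ≤ Δ (k + 1)}.Infinite)
    (hinf2 : {k : ℕ | 1 ≤ k ∧ Δ (k + 1) < η * Δ k}.Infinite) :
    ∃ y : ℕ → ℝ, ∃ n : ℕ → ℕ,
      IsPGSWith y (max (1 / Real.sqrt γ) η) n ∧ ∀ k, 1 ≤ k → Δ k ≤ y k := by
  classical
  set β : ℝ := max (1 / Real.sqrt γ) η with hβdef
  have hγ0 : (0:ℝ) < γ := lt_trans one_pos hγ
  have hsγ : 1 < Real.sqrt γ := by
    rw [show (1:ℝ) = Real.sqrt 1 from (Real.sqrt_one).symm]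
    exact Real.sqrt_lt_sqrt (by norm_num) hγ
  have hβ0 : 0 < β := lt_of_lt_of_le hη0 (le_max_right _ _)
  have hβ1 : β < 1 := max_lt (by rw [div_lt_one (lt_trans one_pos hsγ)]; exact hsγ) hη1
  have hηβ : η ≤ β := le_max_right _ _
  have hγβ : 1 / Real.sqrt γ ≤ β := le_max_left _ _
  set p : ℕ → Prop := fun k => 1 ≤ k ∧ η * Δ k ≤ Δ (k + 1) with hpdef
  have hpinf : (setOf p).Infinite := hinf1
  set N : ℕ → ℕ := Nat.nth p with hNdef
  have hNmono : StrictMono N := Nat.nth_strictMono hpinf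
  have hNmem : ∀ i, p (N i) := fun i => Nat.nth_mem_of_infinite hpinf i
  have hN1 : ∀ i, 1 ≤ N i := fun i => (hNmem i).1
  have hcountN : ∀ i, Nat.count p (N i) = i := fun i => Nat.count_nth_of_infinite hpinf i
  have hcountN1 : ∀ i, Nat.count p (N i + 1) = i + 1 := fun i =>
    Nat.count_nth_succ_of_infinite hpinf i
  -- between consecutive C1 indices, C2 holds
  have hgap : ∀ j i, N j < i → i < N (j + 1) → Δ (i + 1) < η * Δ i := by
    intro j i h1 h2
    have hi1 : 1 ≤ i := le_trans (hN1 j) (le_of_lt h1)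
    by_contra hcon
    push_neg at hcon
    have hpi : p i := ⟨hi1, hcon⟩
    have hm : Nat.nth p (Nat.count p i) = i := Nat.nth_count hpi
    have h4 : j + 1 ≤ Nat.count p i := by
      have h5 := Nat.count_monotone p (Nat.succ_le_of_lt h1)
      rw [hcountN1 j] at h5
      exact h5
    have h6 : Nat.count p i < j + 1 := hNmono.lt_iff_lt.mp (by rw [hNdef, hm]; exact h2)
    omega
  -- ρ is constant on each chunk
  have hρstep : ∀ j i, N j + 1 ≤ i → i ≤ N (j + 1) → ρ i = ρ (N j + 1) := by
    intro j i
    induction i with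
    | zero => intro h _; omega
    | succ i ih =>
      intro h1 h2
      rcases Nat.lt_or_ge (N j + 1) (i + 1) with hlt | hge
      · have hi1 : N j + 1 ≤ i := by omega
        have hd : Δ (i + 1) < η * Δ i := hgap j i (by omega) (by omega)
        have hr := hrule2 i (by have := hN1 j; omega) hd
        rw [hr, ih hi1 (by omega)]
      · have heq : i + 1 = N j + 1 := by omega
        rw [heq]
  -- ρ grows geometrically along C1 indices
  have hρN : ∀ j, ρ (N j) = ρ (N 0) * γ ^ j := by
    intro j
    induction j with
    | zero => simp
    | succ j ih =>
      have hlt : N j < N (j + 1) := hNmono (lt_add_one j)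
      have h1 : ρ (N (j + 1)) = ρ (N j + 1) := hρstep j (N (j + 1)) (by omega) le_rfl
      have h2 : ρ (N j + 1) = γ * ρ (N j) := hrule1 (N j) (hN1 j) (hNmem j).2
      rw [h1, h2, ih]; ring
  have hsqrtpow : ∀ j : ℕ, Real.sqrt (γ ^ j) = (Real.sqrt γ) ^ j := by
    intro j
    induction j with
    | zero => simp
    | succ j ih => rw [pow_succ, Real.sqrt_mul (pow_nonneg hγ0.le j), ih, pow_succ]
  set C : ℝ := c / Real.sqrt (ρ (N 0)) with hCdef
  have hρ0pos : 0 < ρ (N 0) := hρpos _ (hN1 0)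
  have hs0pos : 0 < Real.sqrt (ρ (N 0)) := Real.sqrt_pos.mpr hρ0pos
  have hC0 : 0 < C := div_pos hc hs0pos
  -- the peak bound
  have hpeak : ∀ j, Δ (N j + 1) ≤ C * β ^ j := by
    intro j
    have h1 : Δ (N j + 1) ≤ c / Real.sqrt (ρ (N j)) := hlem (N j) (hN1 j) (hNmem j).2
    have h2 : Real.sqrt (ρ (N j)) = Real.sqrt (ρ (N 0)) * (Real.sqrt γ) ^ j := by
      rw [hρN j, Real.sqrt_mul hρ0pos.le, hsqrtpow]
    have hsg : Real.sqrt γ ≠ 0 := ne_of_gt (lt_trans one_pos hsγ)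
    have h3 : c / Real.sqrt (ρ (N j)) = C * (1 / Real.sqrt γ) ^ j := by
      rw [h2, hCdef]
      field_simp
      rw [← mul_pow, mul_one_div_cancel hsg, one_pow]
    calc Δ (N j + 1) ≤ C * (1 / Real.sqrt γ) ^ j := by rw [← h3]; exact h1
      _ ≤ C * β ^ j := by
          exact mul_le_mul_of_nonneg_left
            (pow_le_pow_left₀ (by positivity) hγβ j) hC0.le
  -- Δ contracts with rate β within each chunk
  have hdecay : ∀ j k, N j + 1 ≤ k → k ≤ N (j + 1) →
      Δ k ≤ Δ (N j + 1) * β ^ (k - N j - 1) := by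
    intro j k
    induction k with
    | zero => intro h _; omega
    | succ k ih =>
      intro h1 h2
      rcases Nat.lt_or_ge (N j + 1) (k + 1) with hlt | hge
      · have hk1 : N j + 1 ≤ k := by omega
        have hd : Δ (k + 1) < η * Δ k := hgap j k (by omega) (by omega)
        have h3 : Δ (k + 1) ≤ β * Δ k :=
          le_trans hd.le (mul_le_mul_of_nonneg_right hηβ
            (hΔpos k (by have := hN1 j; omega)).le)
        have h4 := ih hk1 (by omega)
        have hexp : (k + 1) - N j - 1 = (k - N j - 1) + 1 := by omega
        rw [hexp, pow_succ]
        calc Δ (k + 1) ≤ β * Δ k := h3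
          _ ≤ β * (Δ (N j + 1) * β ^ (k - N j - 1)) :=
              mul_le_mul_of_nonneg_left h4 hβ0.le
          _ = Δ (N j + 1) * (β ^ (k - N j - 1) * β) := by ring
      · have heq : k + 1 = N j + 1 := by omega
        have hz : N j + 1 - N j - 1 = 0 := by omega
        rw [heq, hz]
        simp
  -- value of the count on each chunk
  have hcnt : ∀ j k, N j + 1 ≤ k → k ≤ N (j + 1) → Nat.count p k = j + 1 := by
    intro j k h1 h2
    have ha : j + 1 ≤ Nat.count p k := by
      have h := Nat.count_monotone p h1
      rw [hcountN1 j] at h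
      exact h
    have hb : Nat.count p k ≤ j + 1 := by
      have h := Nat.count_monotone p h2
      rw [hcountN (j + 1)] at h
      exact h
    omega
  set y : ℕ → ℝ := fun k => if k ≤ N 0 then Δ k
    else C * β ^ (Nat.count p k - 1) * β ^ (k - N (Nat.count p k - 1) - 1) with hydef
  have hyk : ∀ k, y k = if k ≤ N 0 then Δ k
      else C * β ^ (Nat.count p k - 1) * β ^ (k - N (Nat.count p k - 1) - 1) :=
    fun k => rfl
  set n : ℕ → ℕ := fun j => N (j - 1) with hndef
  have hnk : ∀ j, n j = N (j - 1) := fun j => rfl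
  -- value of y on each chunk
  have hyval : ∀ j k, N j + 1 ≤ k → k ≤ N (j + 1) →
      y k = C * β ^ j * β ^ (k - N j - 1) := by
    intro j k h1 h2
    have hnot : ¬ k ≤ N 0 := by
      have : N 0 ≤ N j := hNmono.monotone (Nat.zero_le j)
      omega
    rw [hyk k, if_neg hnot, hcnt j k h1 h2]
    simp
  have hpeakval : ∀ j, 1 ≤ j → y (n j + 1) = C * β ^ (j - 1) := by
    intro j hj
    have hj1 : j - 1 + 1 = j := by omega
    have hlt : N (j - 1) < N (j - 1 + 1) := hNmono (lt_add_one _)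
    have := hyval (j - 1) (N (j - 1) + 1) le_rfl (by omega)
    rw [hnk j, this]
    have hz : N (j - 1) + 1 - N (j - 1) - 1 = 0 := by omega
    rw [hz]
    simp
  refine ⟨y, n, ⟨?_, hβ0, hβ1, ?_, ?_, ?_⟩, ?_⟩
  · -- positivity
    intro k hk
    rw [hyk k]
    split_ifs with h
    · exact hΔpos k hk
    · exact mul_pos (mul_pos hC0 (pow_pos hβ0 _)) (pow_pos hβ0 _)
  · -- strict monotonicity of n
    intro j hj
    rw [hnk j, hnk (j + 1)]
    exact hNmono (by omega)
  · -- chunk geometric formula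
    intro j hj k h1 h2
    have hj1 : j - 1 + 1 = j := by omega
    have h1' : N (j - 1) + 1 ≤ k := by rw [hnk j] at h1; exact h1
    have h2' : k ≤ N (j - 1 + 1) := by rw [hj1]; rw [hnk (j + 1)] at h2; simpa using h2
    rw [hyval (j - 1) k h1' h2', hpeakval j hj, hnk j]
  · -- peaks geometric
    intro j hj
    rw [hpeakval j hj, hpeakval 1 le_rfl]
    simp
  · -- domination
    intro k hk
    rw [hyk k]
    split_ifs with h
    · exact le_refl _
    · push_neg at h
      set j := Nat.findGreatest (fun i => N i < k) k with hjdef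
      have hj1 : N j < k := Nat.findGreatest_spec (P := fun i => N i < k) (Nat.zero_le k) h
      have hj2 : k ≤ N (j + 1) := by
        by_contra hcon
        push_neg at hcon
        have h5 : j + 1 ≤ k := le_of_lt (lt_of_le_of_lt hNmono.le_apply hcon)
        exact Nat.findGreatest_is_greatest (Nat.lt_succ_self j) h5 hcon
      have hy : y k = C * β ^ j * β ^ (k - N j - 1) := hyval j k (by omega) hj2
      rw [hyk k, if_neg (by omega : ¬ k ≤ N 0)] at hy
      rw [hy]
      calc Δ k ≤ Δ (N j + 1) * β ^ (k - N j - 1) := hdecay j k (by omega) hj2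
        _ ≤ C * β ^ j * β ^ (k - N j - 1) :=
            mul_le_mul_of_nonneg_right (hpeak j) (pow_nonneg hβ0.le _)
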